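/- arXiv:0904.1315 — 2 statements merged into one kernel-verified Lean document; each statement's English description precedes it below -/
import Mathlib

section
/- For every natural number n there exists an odd positive integer M such that neither M + 2^k nor |M - 2^k| is a prime power for any k ≤ n, and M > n. -/
lemma not_isPrimePow_two_primes {x p q : ℕ} (hp : p.Prime) (hq : q.Prime)
    (hpq : p ≠ q) (hpx : p ∣ x) (hqx : q ∣ x) (hx : x ≠ 0) : ¬ IsPrimePow x := by
  rintro ⟨p₀, k₀, hp₀, hk₀, rfl⟩
  have hp₀' : p₀.Prime := Nat.prime_iff.mpr hp₀
  have h1 : p = p₀ := (Nat.prime_dvd_prime_iff_eq hp hp₀').mp (hp.dvd_of_dvd_pow hpx)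
  have h2 : q = p₀ := (Nat.prime_dvd_prime_iff_eq hq hp₀').mp (hq.dvd_of_dvd_pow hqx)
  exact hpq (h1.trans h2.symm)

lemma cs_key (n : ℕ) : ∃ a d : ℕ, Odd a ∧ 0 < d ∧ 2 ∣ d ∧ ∀ k < n,
    ∃ p q r s : ℕ, p.Prime ∧ q.Prime ∧ r.Prime ∧ s.Prime ∧ p ≠ q ∧ r ≠ s ∧
    p ∣ d ∧ q ∣ d ∧ r ∣ d ∧ s ∣ d ∧
    (p:ℤ) ∣ ((a:ℤ) + 2^k) ∧ (q:ℤ) ∣ ((a:ℤ) + 2^k) ∧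
    (r:ℤ) ∣ ((a:ℤ) - 2^k) ∧ (s:ℤ) ∣ ((a:ℤ) - 2^k) := by
  induction n with
  | zero => exact ⟨1, 2, odd_one, by norm_num, dvd_refl 2, fun k hk => absurd hk (by omega)⟩
  | succ n ih =>
    obtain ⟨a, d, ha, hd, hd2, H⟩ := ih
    obtain ⟨p, hdp', hp⟩ := Nat.exists_infinite_primes (d+1)
    obtain ⟨q, hpq', hq⟩ := Nat.exists_infinite_primes (p+1)
    obtain ⟨r, hqr', hr⟩ := Nat.exists_infinite_primes (q+1)
    obtain ⟨s, hrs', hs⟩ := Nat.exists_infinite_primes (r+1)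
    have cop_dx : ∀ x : ℕ, x.Prime → d < x → Nat.Coprime d x := by
      intro x hx hdx
      exact (hx.coprime_iff_not_dvd.mpr (fun h => absurd (Nat.le_of_dvd hd h) (by omega))).symm
    have cop_dp := cop_dx p hp (by omega)
    have cop_dq := cop_dx q hq (by omega)
    have cop_dr := cop_dx r hr (by omega)
    have cop_ds := cop_dx s hs (by omega)
    have cop_pr : Nat.Coprime p r := (Nat.coprime_primes hp hr).mpr (by omega)
    have cop_ps : Nat.Coprime p s := (Nat.coprime_primes hp hs).mpr (by omega)
    have cop_qr : Nat.Coprime q r := (Nat.coprime_primes hq hr).mpr (by omega)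
    have cop_qs : Nat.Coprime q s := (Nat.coprime_primes hq hs).mpr (by omega)
    have cop1 : Nat.Coprime d (p*q) := Nat.Coprime.mul_right cop_dp cop_dq
    have cop2 : Nat.Coprime (d*(p*q)) (r*s) := by
      refine Nat.Coprime.mul ?_ ?_ <;> refine Nat.Coprime.mul_right ?_ ?_ <;>
        first
          | exact cop_dr | exact cop_ds
          | exact Nat.Coprime.mul cop_pr cop_qr
          | exact Nat.Coprime.mul cop_ps cop_qs
    obtain ⟨b, hb1, hb2⟩ := Nat.chineseRemainder cop1 a (2^n * (p*q - 1))
    obtain ⟨a₀, ha1, ha2⟩ := Nat.chineseRemainder cop2 b (2^n)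
    -- a₀ ≡ a [MOD d]
    have hmod_d : a₀ ≡ a [MOD d] :=
      ((ha1.of_dvd (dvd_mul_right d (p*q))).trans hb1)
    have hmod_pq : a₀ ≡ 2^n * (p*q - 1) [MOD p*q] :=
      ((ha1.of_dvd (dvd_mul_left (p*q) d)).trans hb2)
    have hodd : Odd a₀ := by
      have h2 : a₀ ≡ a [MOD 2] := hmod_d.of_dvd hd2
      have h2' : a₀ % 2 = a % 2 := h2
      have := Nat.odd_iff.mp ha
      rw [Nat.odd_iff]; omega
    refine ⟨a₀, d*(p*q)*(r*s), hodd, Nat.mul_pos (Nat.mul_pos hd (Nat.mul_pos hp.pos hq.pos)) (Nat.mul_pos hr.pos hs.pos), dvd_mul_of_dvd_left (dvd_mul_of_dvd_left hd2 _) _, ?_⟩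
    intro k hk
    rcases Nat.lt_or_ge k n with hkn | hkn
    · obtain ⟨p', q', r', s', h1, h2, h3, h4, h5, h6, h7, h8, h9, h10, h11, h12, h13, h14⟩ := H k hkn
      have hdd : (d:ℤ) ∣ (a:ℤ) - a₀ := hmod_d.dvd
      have trans : ∀ x : ℕ, x ∣ d → ∀ z : ℤ, (x:ℤ) ∣ (a:ℤ) + z → (x:ℤ) ∣ (a₀:ℤ) + z := by
        intro x hx z hz
        have : (x:ℤ) ∣ (a:ℤ) - a₀ := dvd_trans (Int.natCast_dvd_natCast.mpr hx) hdd
        have := dvd_sub hz this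
        convert this using 1; rfl; ring
      refine ⟨p', q', r', s', h1, h2, h3, h4, h5, h6,
        h7.trans (dvd_mul_of_dvd_left (dvd_mul_right d _) _),
        h8.trans (dvd_mul_of_dvd_left (dvd_mul_right d _) _),
        h9.trans (dvd_mul_of_dvd_left (dvd_mul_right d _) _),
        h10.trans (dvd_mul_of_dvd_left (dvd_mul_right d _) _),
        trans p' h7 _ h11, trans q' h8 _ h12, ?_, ?_⟩
      · have := trans r' h9 (-(2^k)) (by simpa [sub_eq_add_neg] using h13)
        simpa [sub_eq_add_neg] using this
      · have := trans s' h10 (-(2^k)) (by simpa [sub_eq_add_neg] using h14)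
        simpa [sub_eq_add_neg] using this
    · have hk' : n = k := by omega
      subst hk'
      have hpq1 : 1 ≤ p * q := Nat.one_le_iff_ne_zero.mpr (Nat.mul_ne_zero hp.pos.ne' hq.pos.ne')
      have hcast : ((2^n * (p*q - 1) : ℕ) : ℤ) = 2^n * ((p:ℤ)*q - 1) := by
        push_cast [hpq1]; ring
      have hdvd_pq : ((p*q : ℕ):ℤ) ∣ (a₀:ℤ) + 2^n := by
        have h1 : ((p*q:ℕ):ℤ) ∣ ((2^n * (p*q - 1) : ℕ):ℤ) - a₀ := hmod_pq.dvd
        have h2 : ((p*q:ℕ):ℤ) ∣ ((2^n * (p*q - 1) : ℕ):ℤ) + 2^n := by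
          rw [hcast]; push_cast; exact ⟨2^n, by ring⟩
        have := dvd_sub h2 h1
        convert this using 1; rfl; ring
      have hdvd_rs : ((r*s : ℕ):ℤ) ∣ (a₀:ℤ) - 2^n := by
        have h1 : ((r*s:ℕ):ℤ) ∣ ((2^n : ℕ):ℤ) - a₀ := ha2.dvd
        have := dvd_neg.mpr h1
        convert this using 1; rfl; push_cast; ring
      refine ⟨p, q, r, s, hp, hq, hr, hs, by omega, by omega,
        dvd_mul_of_dvd_left (dvd_mul_of_dvd_right (dvd_mul_right p q) d) _,
        dvd_mul_of_dvd_left (dvd_mul_of_dvd_right (dvd_mul_left q p) d) _,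
        dvd_mul_of_dvd_right (dvd_mul_right r s) _,
        dvd_mul_of_dvd_right (dvd_mul_left s r) _,
        ?_, ?_, ?_, ?_⟩
      · exact dvd_trans (by push_cast; exact ⟨q, by ring⟩) hdvd_pq
      · exact dvd_trans (by push_cast; exact ⟨p, by ring⟩) hdvd_pq
      · exact dvd_trans (by push_cast; exact ⟨s, by ring⟩) hdvd_rs
      · exact dvd_trans (by push_cast; exact ⟨r, by ring⟩) hdvd_rs

theorem cohen_selfridge_finitary (n : ℕ) :
    ∃ M : ℕ, Odd M ∧ 0 < M ∧ M > n ∧ ∀ k : ℕ, k ≤ n →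
      ¬ IsPrimePow (M + 2 ^ k) ∧
      ¬ IsPrimePow ((M - 2 ^ k : ℤ).natAbs) := by
  obtain ⟨a, d, ha, hd, hd2, H⟩ := cs_key (n+1)
  obtain ⟨M, hM⟩ : ∃ M : ℕ, M = a + d * (2^n + n + 1) := ⟨_, rfl⟩
  have ha1 : 1 ≤ a := ha.pos
  have hle : 2^n + n + 1 ≤ d * (2^n + n + 1) := Nat.le_mul_of_pos_left _ hd
  have hMbig : 2^n + n < M := by omega
  have hdvd2 : 2 ∣ d * (2^n + n + 1) := hd2.mul_right _
  have hModd : Odd M := hM ▸ ha.add_even (even_iff_two_dvd.mpr hdvd2)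
  have hMn : n < M := lt_of_le_of_lt (Nat.le_add_left n (2^n)) hMbig
  refine ⟨M, hModd, (Nat.zero_le n).trans_lt hMn, hMn, ?_⟩
  intro k hk
  have h2k : 2^k ≤ 2^n := Nat.pow_le_pow_right (by norm_num) hk
  obtain ⟨p, q, r, s, hp, hq, hr, hs, hpq, hrs, hpd, hqd, hrd, hsd, h11, h12, h13, h14⟩ :=
    H k (by omega)
  have hdt : ∀ x : ℕ, x ∣ d → (x:ℤ) ∣ ((d * (2^n+n+1) : ℕ) : ℤ) :=
    fun x hx => Int.natCast_dvd_natCast.mpr (hx.mul_right _)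
  constructor
  · have hplus : ∀ x : ℕ, x ∣ d → (x:ℤ) ∣ ((a:ℤ) + 2^k) → x ∣ (M + 2^k) := by
      intro x hxd hxz
      have hc : (x:ℤ) ∣ ((M + 2^k : ℕ) : ℤ) := by
        have h := dvd_add hxz (hdt x hxd)
        have e : ((M + 2^k : ℕ) : ℤ) = ((a:ℤ) + 2^k) + ((d * (2^n+n+1) : ℕ) : ℤ) := by
          push_cast [hM]; ring
        rw [e]; exact h
      exact_mod_cast hc
    exact not_isPrimePow_two_primes hp hq hpq (hplus p hpd h11) (hplus q hqd h12) (Nat.add_pos_right M (Nat.two_pow_pos k)).ne'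
  · have hminus : ∀ x : ℕ, x ∣ d → (x:ℤ) ∣ ((a:ℤ) - 2^k) → x ∣ ((M:ℤ) - 2^k).natAbs := by
      intro x hxd hxz
      have hz : (x:ℤ) ∣ ((M:ℤ) - 2^k) := by
        have h := dvd_add hxz (hdt x hxd)
        have e : ((M:ℤ) - 2^k) = ((a:ℤ) - 2^k) + ((d * (2^n+n+1) : ℕ) : ℤ) := by
          push_cast [hM]; ring
        rw [e]; exact h
      have h2 : ((x:ℤ)).natAbs ∣ ((M:ℤ) - 2^k).natAbs := Int.natAbs_dvd_natAbs.mpr hz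
      simpa using h2
    have hne : ((M:ℤ) - 2^k).natAbs ≠ 0 := by
      rw [Int.natAbs_ne_zero]
      have h1 : (2^k : ℤ) < (M:ℤ) := by exact_mod_cast (show (2:ℕ)^k < M by omega)
      exact sub_ne_zero.mpr h1.ne'
    exact not_isPrimePow_two_primes hr hs hrs (hminus r hrd h13) (hminus s hsd h14) hne
end

section
/- In a free group F on generators x₁, …, xₙ, the quotient of F by the normal closure of the set of iterated commutators [x_{i₁}, …, x_{i_k}] (k ≥ 2) in which some index repeats is a torsion-free group. -/
open scoped commutatorElement

/-- A monoid is torsion-free if no nontrivial element has finite order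
(the former Mathlib `Monoid.IsTorsionFree`, removed since). -/
def Monoid.IsTorsionFree (G : Type*) [Monoid G] : Prop :=
  ∀ g : G, g ≠ 1 → ¬IsOfFinOrder g

/-- Left-normed iterated commutator of a list of group elements. -/
def leftComm {G : Type*} [Group G] : List G → G
  | [] => 1
  | a :: t => t.foldl (fun acc b => ⁅acc, b⁆) a

namespace CohenAux
open Finsupp

variable {α : Type} [DecidableEq α]

abbrev M (α : Type) [DecidableEq α] := List α →₀ ℤ

noncomputable def Eop (i : α) : Module.End ℤ (M α) :=
  Finsupp.linearCombination ℤ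
    (fun t : List α => if (i :: t).Nodup then Finsupp.single (i :: t) (1:ℤ) else 0)

lemma Eop_single (i : α) (t : List α) (c : ℤ) :
    Eop i (Finsupp.single t c) =
      c • (if (i :: t).Nodup then Finsupp.single (i :: t) (1:ℤ) else 0) := by
  simp [Eop, Finsupp.linearCombination_single]

lemma Eop_apply (i : α) (f : M α) :
    Eop i f = f.sum fun t c =>
      c • (if (i :: t).Nodup then Finsupp.single (i :: t) (1:ℤ) else 0) := by
  simp [Eop, Finsupp.linearCombination_apply]

lemma Eop_apply_ne_head (b x₀ : α) (hb : b ≠ x₀) (f : M α) (u : List α) :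
    (Eop b f) (x₀ :: u) = 0 := by
  rw [Eop_apply, Finsupp.sum_apply, Finsupp.sum]
  apply Finset.sum_eq_zero
  intro t _
  rw [Finsupp.smul_apply]
  split_ifs with h
  · rw [Finsupp.single_apply]
    have hne : ¬ (b :: t = x₀ :: u) := by
      intro hc
      exact hb (List.head_eq_of_cons_eq hc)
    rw [if_neg hne, smul_zero]
  · simp

noncomputable def Ew (w : List α) : Module.End ℤ (M α) := (w.map Eop).prod

@[simp] lemma Ew_nil : (Ew [] : Module.End ℤ (M α)) = 1 := rfl

lemma Ew_cons (i : α) (w : List α) : Ew (i :: w) = Eop i * Ew w := by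
  simp [Ew]

lemma Ew_append (u v : List α) : (Ew (u ++ v) : Module.End ℤ (M α)) = Ew u * Ew v := by
  simp [Ew, List.prod_append]

lemma Ew_single (w v : List α) (hw : w ≠ []) :
    Ew w (Finsupp.single v (1:ℤ)) =
      if (w ++ v).Nodup then Finsupp.single (w ++ v) (1:ℤ) else 0 := by
  induction w with
  | nil => exact absurd rfl hw
  | cons i w ih =>
    by_cases hnil : w = []
    · subst hnil
      rw [Ew_cons, Module.End.mul_apply, Ew_nil, Module.End.one_apply, Eop_single, one_smul]
      rfl
    · rw [Ew_cons, Module.End.mul_apply, ih hnil]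
      split_ifs with h1 h2 h2
      · rw [Eop_single]
        have : (i :: (w ++ v)).Nodup := h2
        rw [if_pos this, one_smul]
        rfl
      · rw [Eop_single]
        have : ¬ (i :: (w ++ v)).Nodup := fun hc => h2 hc
        rw [if_neg this, smul_zero]
      · exact absurd h2.of_cons h1
      · simp

lemma Ew_eq_zero {w : List α} (h : ¬ w.Nodup) : (Ew w : Module.End ℤ (M α)) = 0 := by
  have hw : w ≠ [] := by rintro rfl; exact h List.nodup_nil
  apply Finsupp.lhom_ext
  intro v b
  have hb : Finsupp.single v b = b • Finsupp.single v (1:ℤ) := by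
    rw [Finsupp.smul_single, smul_eq_mul, mul_one]
  rw [hb, map_smul, map_smul, Ew_single w v hw]
  have : ¬ (w ++ v).Nodup := fun hc => h ((List.sublist_append_left w v).nodup hc)
  rw [if_neg this]
  simp

/-- span of `Ew v` over `v` satisfying `P` -/
noncomputable def sp (P : List α → Prop) : Submodule ℤ (Module.End ℤ (M α)) :=
  Submodule.span ℤ {x | ∃ v, P v ∧ x = Ew v}

lemma Ew_mem_sp {P : List α → Prop} {v : List α} (h : P v) : Ew v ∈ sp P :=
  Submodule.subset_span ⟨v, h, rfl⟩

lemma sp_mono {P Q : List α → Prop} (h : ∀ v, P v → Q v) : sp P ≤ sp Q := by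
  apply Submodule.span_mono
  rintro x ⟨v, hv, rfl⟩
  exact ⟨v, h v hv, rfl⟩

lemma mul_mem_sp {P Q R : List α → Prop} (hPQ : ∀ u v, P u → Q v → R (u ++ v))
    {x y : Module.End ℤ (M α)} (hx : x ∈ sp P) (hy : y ∈ sp Q) : x * y ∈ sp R := by
  induction hx using Submodule.span_induction with
  | mem x hx =>
    obtain ⟨u, hu, rfl⟩ := hx
    induction hy using Submodule.span_induction with
    | mem y hy =>
      obtain ⟨v, hv, rfl⟩ := hy
      rw [← Ew_append]
      exact Ew_mem_sp (hPQ u v hu hv)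
    | zero => simp
    | add y z _ _ h1 h2 => rw [mul_add]; exact add_mem h1 h2
    | smul c y _ h1 => rw [mul_smul_comm]; exact Submodule.smul_mem _ _ h1
  | zero => simp
  | add x z _ _ h1 h2 => rw [add_mul]; exact add_mem h1 h2
  | smul c x _ h1 => rw [smul_mul_assoc]; exact Submodule.smul_mem _ _ h1

lemma sp_eq_bot {P : List α → Prop} (h : ∀ v, P v → (Ew v : Module.End ℤ (M α)) = 0) :
    sp P = ⊥ := by
  apply le_bot_iff.mp
  apply Submodule.span_le.mpr
  rintro x ⟨v, hv, rfl⟩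
  simp [h v hv]

end CohenAux

lemma leftComm_singleton {G : Type*} [Group G] (a : G) : leftComm [a] = a := rfl

lemma leftComm_append_singleton {G : Type*} [Group G] (l : List G) (b : G) (h : l ≠ []) :
    leftComm (l ++ [b]) = ⁅leftComm l, b⁆ := by
  cases l with
  | nil => exact absurd rfl h
  | cons a t => simp [leftComm, List.foldl_append]

namespace CohenAux
open Finsupp

variable {α : Type} [DecidableEq α]

noncomputable def LieE : List α → Module.End ℤ (M α)
  | [] => 1
  | a :: t => t.foldl (fun acc b => acc * Eop b - Eop b * acc) (Eop a)

lemma LieE_singleton (a : α) : LieE [a] = Eop a := rfl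

lemma LieE_append (l : List α) (b : α) (h : l ≠ []) :
    LieE (l ++ [b]) = LieE l * Eop b - Eop b * LieE l := by
  cases l with
  | nil => exact absurd rfl h
  | cons a t => simp [LieE, List.foldl_append]

def SPred (m : Multiset α) (k : ℕ) (c : List α) : List α → Prop :=
  fun v => m ≤ ↑v ∧ k ≤ v.length ∧ ∀ x ∈ v, x ∈ c

lemma sp_SPred_le {m m' : Multiset α} {k k' : ℕ} {c c' : List α}
    (hm : m' ≤ m) (hk : k' ≤ k) (hc : ∀ x ∈ c, x ∈ c') :
    sp (SPred m k c) ≤ sp (SPred m' k' c') := by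
  apply sp_mono
  rintro v ⟨h1, h2, h3⟩
  exact ⟨le_trans hm h1, le_trans hk h2, fun x hx => hc x (h3 x hx)⟩

lemma spmul {m m' : Multiset α} {k k' : ℕ} {c : List α} {x y : Module.End ℤ (M α)}
    (hx : x ∈ sp (SPred m k c)) (hy : y ∈ sp (SPred m' k' c)) :
    x * y ∈ sp (SPred (m + m') (k + k') c) := by
  apply mul_mem_sp (P := SPred m k c) (Q := SPred m' k' c) _ hx hy
  rintro u v ⟨h1, h2, h3⟩ ⟨h1', h2', h3'⟩
  refine ⟨?_, ?_, ?_⟩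
  · rw [← Multiset.coe_add]
    exact add_le_add h1 h1'
  · rw [List.length_append]
    exact add_le_add h2 h2'
  · intro x hx
    rcases List.mem_append.mp hx with h | h
    · exact h3 x h
    · exact h3' x h

lemma LieE_mem_perm (l : List α) (h : l ≠ []) : LieE l ∈ sp (fun v => v.Perm l) := by
  induction l using List.reverseRecOn with
  | nil => exact absurd rfl h
  | append_singleton l b ih =>
    by_cases hnil : l = []
    · subst hnil
      have he : (Eop b : Module.End ℤ (M α)) = Ew [b] := by simp [Ew_cons]
      have : LieE [b] = Ew [b] := by rw [LieE_singleton, he]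
      rw [show ([] ++ [b] : List α) = [b] from rfl, this]
      exact Ew_mem_sp (List.Perm.refl [b])
    · rw [LieE_append l b hnil]
      have hb : (Eop b : Module.End ℤ (M α)) ∈ sp (fun v => v.Perm [b]) := by
        have he : (Eop b : Module.End ℤ (M α)) = Ew [b] := by simp [Ew_cons]
        rw [he]; exact Ew_mem_sp (List.Perm.refl [b])
      apply sub_mem
      · exact mul_mem_sp (fun u v hu hv => hu.append hv) (ih hnil) hb
      · exact mul_mem_sp
          (fun u v hu hv => (hu.append hv).trans List.perm_append_comm) hb (ih hnil)

lemma LieE_mem_SPred (l : List α) (h : l ≠ []) :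
    LieE l ∈ sp (SPred (↑l) l.length l) := by
  apply sp_mono _ (LieE_mem_perm l h)
  intro v hv
  exact ⟨le_of_eq (Multiset.coe_eq_coe.mpr hv).symm, le_of_eq hv.length_eq.symm,
    fun x hx => hv.mem_iff.mp hx⟩

lemma Eop_sq (i : α) : (Eop i * Eop i : Module.End ℤ (M α)) = 0 := by
  have h : (Eop i * Eop i : Module.End ℤ (M α)) = Ew [i, i] := by
    simp [Ew, List.prod_cons]
  rw [h]
  exact Ew_eq_zero (by simp)

noncomputable def Uu (i : α) : (Module.End ℤ (M α))ˣ where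
  val := 1 + Eop i
  inv := 1 - Eop i
  val_inv := by
    have h : ((1 + Eop i) * (1 - Eop i) : Module.End ℤ (M α)) = 1 - Eop i * Eop i := by
      noncomm_ring
    rw [h, Eop_sq, sub_zero]
  inv_val := by
    have h : ((1 - Eop i) * (1 + Eop i) : Module.End ℤ (M α)) = 1 - Eop i * Eop i := by
      noncomm_ring
    rw [h, Eop_sq, sub_zero]

@[simp] lemma Uu_val (i : α) : (Uu i).val = 1 + Eop i := rfl
@[simp] lemma Uu_inv_val (i : α) : ((Uu i)⁻¹).val = 1 - Eop i := rfl

lemma commutator_val {R : Type*} [Ring R] (x y : Rˣ) :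
    (⁅x, y⁆ : Rˣ).val = 1 + (x.val * y.val - y.val * x.val) * (x⁻¹).val * (y⁻¹).val := by
  rw [commutatorElement_def]
  have h1 : y.val * x.val * ↑x⁻¹ * ↑y⁻¹ = 1 := by
    rw [mul_assoc (y.val), Units.mul_inv, mul_one, Units.mul_inv]
  rw [Units.val_mul, Units.val_mul, Units.val_mul, sub_mul, sub_mul, h1]
  abel

lemma main_expansion (l : List α) (hl : l ≠ []) :
    ∃ r ∈ sp (SPred (↑l) (l.length + 1) l), ∃ s ∈ sp (SPred (↑l) l.length l),
      (leftComm (l.map Uu) : (Module.End ℤ (M α))ˣ).val = 1 + LieE l + r ∧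
      ((leftComm (l.map Uu) : (Module.End ℤ (M α))ˣ)⁻¹).val = 1 + s := by
  induction l using List.reverseRecOn with
  | nil => exact absurd rfl hl
  | append_singleton l b ih =>
    by_cases hnil : l = []
    · subst hnil
      refine ⟨0, zero_mem _, -Eop b, ?_, ?_, ?_⟩
      · apply neg_mem
        have he : (Eop b : Module.End ℤ (M α)) = Ew [b] := by simp [Ew, List.prod_cons]
        rw [he]
        exact Ew_mem_sp ⟨le_refl _, le_refl _, by simp⟩
      · rw [show (([] : List α) ++ [b]) = [b] from rfl]
        simp [leftComm_singleton, LieE_singleton]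
      · rw [show (([] : List α) ++ [b]) = [b] from rfl]
        simp [leftComm_singleton]
        abel
    · obtain ⟨r, hr, s, hs, hval, hinv⟩ := ih hnil
      have hlen1 : 1 ≤ l.length := by
        cases l with
        | nil => exact absurd rfl hnil
        | cons a t => simp
      have hmapne : l.map Uu ≠ [] := by
        simp [hnil]
      have hcomm : leftComm ((l ++ [b]).map Uu) = ⁅leftComm (l.map Uu), Uu b⁆ := by
        rw [List.map_append, show List.map Uu [b] = [Uu b] from rfl,
          leftComm_append_singleton _ _ hmapne]
      set c := (leftComm (l.map Uu) : (Module.End ℤ (M α))ˣ) with hcdef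
      set e := (Eop b : Module.End ℤ (M α)) with hedef
      set L := (LieE l : Module.End ℤ (M α)) with hLdef
      -- memberships basics over support l ++ [b]
      have hsup : ∀ x ∈ l, x ∈ l ++ [b] := fun x hx => List.mem_append.mpr (Or.inl hx)
      have hL : L ∈ sp (SPred (↑l) l.length (l ++ [b])) :=
        sp_SPred_le (le_refl _) (le_refl _) hsup (LieE_mem_SPred l hnil)
      have hr' : r ∈ sp (SPred (↑l) (l.length + 1) (l ++ [b])) :=
        sp_SPred_le (le_refl _) (le_refl _) hsup hr
      have hs' : s ∈ sp (SPred (↑l) l.length (l ++ [b])) :=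
        sp_SPred_le (le_refl _) (le_refl _) hsup hs
      have he : e ∈ sp (SPred (↑[b]) 1 (l ++ [b])) := by
        have heq : e = Ew [b] := by simp [hedef, Ew, List.prod_cons]
        rw [heq]
        exact Ew_mem_sp ⟨le_refl _, le_refl _, by intro x hx; simp at hx; simp [hx]⟩
      -- define remainder terms
      have hA : (L + r) * e - e * (L + r) ∈ sp (SPred (↑l + ↑[b]) (l.length + 1) (l ++ [b])) := by
        have h1 : L + r ∈ sp (SPred (↑l) l.length (l ++ [b])) :=
          add_mem hL (sp_SPred_le (le_refl _) (Nat.le_succ _) (fun x h => h) hr')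
        apply sub_mem
        · exact spmul h1 he
        · exact sp_SPred_le (le_of_eq (add_comm _ _)) (le_of_eq (add_comm _ _)) (fun x h => h)
            (spmul he h1)
      have hm1 : r * e - e * r ∈ sp (SPred (↑l + ↑[b]) (l.length + 2) (l ++ [b])) := by
        apply sub_mem
        · exact sp_SPred_le (le_refl _) (by omega) (fun x h => h) (spmul hr' he)
        · exact sp_SPred_le (le_of_eq (add_comm _ _)) (by omega) (fun x h => h)
            (spmul he hr')
      have hm3 : s - e - s * e ∈ sp (SPred 0 1 (l ++ [b])) := by
        apply sub_mem
        apply sub_mem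
        · exact sp_SPred_le (Multiset.zero_le _) hlen1 (fun x h => h) hs'
        · exact sp_SPred_le (Multiset.zero_le _) (le_refl _) (fun x h => h) he
        · exact sp_SPred_le (Multiset.zero_le _) (by omega) (fun x h => h) (spmul hs' he)
      have hm4 : ((L + r) * e - e * (L + r)) * (s - e - s * e) ∈
          sp (SPred (↑l + ↑[b]) (l.length + 2) (l ++ [b])) := by
        have := spmul hA hm3
        rw [add_zero] at this
        exact sp_SPred_le (le_refl _) (by omega) (fun x h => h) this
      refine ⟨(r * e - e * r) + ((L + r) * e - e * (L + r)) * (s - e - s * e), ?_,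
        (e * (L + r) - (L + r) * e) + (e * (L + r) - (L + r) * e) * (s - e - e * s), ?_, ?_, ?_⟩
      · have : (↑(l ++ [b]) : Multiset α) = ↑l + ↑[b] := (Multiset.coe_add l [b]).symm
        rw [this, List.length_append]
        exact add_mem hm1 hm4
      · have hB : e * (L + r) - (L + r) * e ∈
            sp (SPred (↑l + ↑[b]) (l.length + 1) (l ++ [b])) := by
          apply sub_mem
          · exact sp_SPred_le (le_of_eq (add_comm _ _)) (le_of_eq (add_comm _ _)) (fun x h => h)
              (spmul he (add_mem hL (sp_SPred_le (le_refl _) (Nat.le_succ _) (fun x h => h) hr')))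
          · exact spmul (add_mem hL (sp_SPred_le (le_refl _) (Nat.le_succ _) (fun x h => h) hr')) he
        have hm3' : s - e - e * s ∈ sp (SPred 0 1 (l ++ [b])) := by
          apply sub_mem
          apply sub_mem
          · exact sp_SPred_le (Multiset.zero_le _) hlen1 (fun x h => h) hs'
          · exact sp_SPred_le (Multiset.zero_le _) (le_refl _) (fun x h => h) he
          · exact sp_SPred_le (Multiset.zero_le _) (by omega) (fun x h => h) (spmul he hs')
        have hB2 := spmul hB hm3'
        rw [add_zero] at hB2
        have : (↑(l ++ [b]) : Multiset α) = ↑l + ↑[b] := (Multiset.coe_add l [b]).symm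
        rw [this, List.length_append]
        exact add_mem
          (sp_SPred_le (le_refl _) (by simp only [List.length_append, List.length_singleton]; omega)
            (fun x h => h) hB)
          (sp_SPred_le (le_refl _) (by simp only [List.length_append, List.length_singleton]; omega)
            (fun x h => h) hB2)
      · -- value computation
        rw [hcomm, commutator_val, hval, Uu_val, Uu_inv_val, hinv,
          LieE_append l b hnil]
        have hD : (1 + L + r) * (1 + e) - (1 + e) * (1 + L + r) =
            (L + r) * e - e * (L + r) := by noncomm_ring
        rw [hD]
        noncomm_ring
      · rw [hcomm, commutatorElement_inv, commutator_val, hval, Uu_val, Uu_inv_val, hinv]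
        have hD : (1 + e) * (1 + L + r) - (1 + L + r) * (1 + e) =
            e * (L + r) - (L + r) * e := by noncomm_ring
        rw [hD]
        noncomm_ring

end CohenAux

namespace CohenAux
open Finsupp

variable {α : Type} [DecidableEq α]

/-- relators die -/
lemma leftComm_Uu_eq_one {l : List α} (hnd : ¬ l.Nodup) :
    (leftComm (l.map Uu) : (Module.End ℤ (M α))ˣ) = 1 := by
  have hl : l ≠ [] := by rintro rfl; exact hnd List.nodup_nil
  obtain ⟨r, hr, s, hs, hval, _⟩ := main_expansion l hl
  have hzero : ∀ v : List α, (↑l : Multiset α) ≤ ↑v → (Ew v : Module.End ℤ (M α)) = 0 := by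
    intro v hv
    obtain ⟨x, hx⟩ : ∃ x, 1 < l.count x := by
      by_contra hc
      push_neg at hc
      exact hnd (List.nodup_iff_count_le_one.mpr hc)
    apply Ew_eq_zero
    intro hvnd
    have h1 : l.count x ≤ v.count x := by
      have := Multiset.le_iff_count.mp hv x
      simpa using this
    have := List.nodup_iff_count_le_one.mp hvnd x
    omega
  have hLie : LieE l = 0 := by
    have h1 := LieE_mem_SPred l hl
    have h2 : sp (SPred (↑l : Multiset α) l.length l) = ⊥ :=
      sp_eq_bot (fun v hv => hzero v hv.1)
    rw [h2, Submodule.mem_bot] at h1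
    exact h1
  have hrz : r = 0 := by
    have h2 : sp (SPred (↑l : Multiset α) (l.length + 1) l) = ⊥ :=
      sp_eq_bot (fun v hv => hzero v hv.1)
    rw [h2, Submodule.mem_bot] at hr
    exact hr
  apply Units.ext
  rw [hval, hLie, hrz]
  simp

/-- exact formula in the nodup case -/
lemma leftComm_Uu_of_nodup {l : List α} (hl : l ≠ []) (hnd : l.Nodup) :
    (leftComm (l.map Uu) : (Module.End ℤ (M α))ˣ).val = 1 + LieE l := by
  obtain ⟨r, hr, s, hs, hval, _⟩ := main_expansion l hl
  have hrz : r = 0 := by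
    have h2 : sp (SPred (↑l : Multiset α) (l.length + 1) l) = ⊥ := by
      apply sp_eq_bot
      rintro v ⟨h1, h2, h3⟩
      apply Ew_eq_zero
      intro hvnd
      have hsub : v.toFinset ⊆ l.toFinset := by
        intro x hx
        rw [List.mem_toFinset] at hx ⊢
        exact h3 x hx
      have hc1 : v.toFinset.card = v.length := List.toFinset_card_of_nodup hvnd
      have hc2 : l.toFinset.card = l.length := List.toFinset_card_of_nodup hnd
      have := Finset.card_le_card hsub
      omega
    rw [h2, Submodule.mem_bot] at hr
    exact hr
  rw [hval, hrz, add_zero]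

/-- products of first-letter-sharing Lie elements vanish -/
lemma LieE_mul_LieE {x₀ : α} (w w' : List α) :
    (LieE (x₀ :: w) * LieE (x₀ :: w') : Module.End ℤ (M α)) = 0 := by
  have h1 := LieE_mem_SPred (x₀ :: w) (by simp)
  have h2 := LieE_mem_SPred (x₀ :: w') (by simp)
  have h1' : LieE (x₀ :: w) ∈
      sp (SPred (↑(x₀ :: w)) (x₀ :: w).length ((x₀ :: w) ++ x₀ :: w')) :=
    sp_SPred_le (le_refl _) (le_refl _)
      (fun x h => List.mem_append.mpr (Or.inl h)) h1
  have h2' : LieE (x₀ :: w') ∈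
      sp (SPred (↑(x₀ :: w')) (x₀ :: w').length ((x₀ :: w) ++ x₀ :: w')) :=
    sp_SPred_le (le_refl _) (le_refl _)
      (fun x h => List.mem_append.mpr (Or.inr h)) h2
  have h3 := spmul h1' h2'
  have hbot : sp (SPred ((↑(x₀ :: w) : Multiset α) + (↑(x₀ :: w') : Multiset α))
      ((x₀ :: w).length + (x₀ :: w').length) ((x₀ :: w) ++ x₀ :: w')) = ⊥ := by
    apply sp_eq_bot
    rintro v ⟨hm, _, _⟩
    apply Ew_eq_zero
    intro hvnd
    have hcnt : Multiset.count x₀ ((↑(x₀ :: w) : Multiset α) + (↑(x₀ :: w') : Multiset α)) ≤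
        Multiset.count x₀ (↑v : Multiset α) := Multiset.le_iff_count.mp hm x₀
    have hv1 : v.count x₀ ≤ 1 := List.nodup_iff_count_le_one.mp hvnd x₀
    rw [Multiset.count_add] at hcnt
    have e1 : Multiset.count x₀ (↑(x₀ :: w) : Multiset α) = (x₀ :: w).count x₀ := by simp
    have e2 : Multiset.count x₀ (↑(x₀ :: w') : Multiset α) = (x₀ :: w').count x₀ := by simp
    have e3 : Multiset.count x₀ (↑v : Multiset α) = v.count x₀ := by simp
    rw [e1, e2, e3] at hcnt
    have c1 : 1 ≤ (x₀ :: w).count x₀ := by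
      rw [List.count_cons]
      simp
    have c2 : 1 ≤ (x₀ :: w').count x₀ := by
      rw [List.count_cons]
      simp
    omega
  rw [hbot, Submodule.mem_bot] at h3
  exact h3

/-- key linear independence / coefficient lemma -/
lemma LieE_coeff (x₀ : α) (t : List α) : ∀ (v u : List α), ((x₀ :: t) ++ v).Nodup →
    (LieE (x₀ :: t) (Finsupp.single v (1:ℤ))) (x₀ :: u) = if u = t ++ v then 1 else 0 := by
  induction t using List.reverseRecOn with
  | nil =>
    intro v u h
    rw [LieE_singleton, Eop_single]
    have hnd : (x₀ :: v).Nodup := by simpa using h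
    rw [if_pos hnd, one_smul, Finsupp.single_apply]
    by_cases he : u = v
    · subst he; simp
    · have hne : ¬ (x₀ :: v = x₀ :: u) := fun hc => he (List.tail_eq_of_cons_eq hc).symm
      rw [if_neg hne]
      simp [he]
  | append_singleton t b ih =>
    intro v u h
    have hx : x₀ :: (t ++ [b]) = (x₀ :: t) ++ [b] := by simp
    have hcons : (x₀ :: (t ++ [b] ++ v)).Nodup := by simpa using h
    have hx0 : x₀ ∉ t ++ [b] ++ v := (List.nodup_cons.mp hcons).1
    have hrest : (t ++ [b] ++ v).Nodup := (List.nodup_cons.mp hcons).2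
    have hb : b ≠ x₀ := by
      intro hc; subst hc; exact hx0 (by simp)
    have hbv : (b :: v).Nodup := by
      have hsl : List.Sublist (b :: v) (t ++ (b :: v)) := List.sublist_append_right t (b :: v)
      apply hsl.nodup
      rwa [List.append_assoc] at hrest
    have hih : ((x₀ :: t) ++ (b :: v)).Nodup := by
      have h2 : (x₀ :: (t ++ (b :: v))).Nodup := by
        simpa [List.append_assoc] using hcons
      simpa using h2
    rw [hx, LieE_append _ b (by simp), LinearMap.sub_apply, Finsupp.sub_apply,
      Module.End.mul_apply, Module.End.mul_apply]
    rw [Eop_single, if_pos hbv, one_smul]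
    rw [ih (b :: v) u hih, Eop_apply_ne_head b x₀ hb]
    simp [List.append_assoc]

end CohenAux

-- generic leftComm lemmas
lemma map_leftComm {G H : Type*} [Group G] [Group H] (f : G →* H) (l : List G) :
    f (leftComm l) = leftComm (l.map f) := by
  cases l with
  | nil => simp [leftComm]
  | cons a t =>
    simp only [leftComm, List.map_cons]
    induction t generalizing a with
    | nil => simp
    | cons b t ih =>
      simp only [List.foldl_cons, List.map_cons]
      rw [← map_commutatorElement]
      exact ih ⁅a, b⁆

lemma foldl_comm_one {G : Type*} [Group G] (t : List G) :
    t.foldl (fun acc b => ⁅acc, b⁆) 1 = 1 := by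
  induction t with
  | nil => rfl
  | cons b t ih =>
    simp only [List.foldl_cons]
    have : ⁅(1:G), b⁆ = 1 := by simp [commutatorElement_def]
    rw [this]
    exact ih

lemma foldl_comm_of_one_mem {G : Type*} [Group G] (t : List G) :
    ∀ a : G, (1:G) ∈ t → t.foldl (fun acc b => ⁅acc, b⁆) a = 1 := by
  induction t with
  | nil => intro a h; simp at h
  | cons b t ih =>
    intro a h
    rcases List.mem_cons.mp h with h1 | h1
    · subst h1
      simp only [List.foldl_cons]
      have : ⁅a, (1:G)⁆ = 1 := by simp [commutatorElement_def]
      rw [this]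
      exact foldl_comm_one t
    · exact ih _ h1

lemma leftComm_eq_one_of_one_mem {G : Type*} [Group G] {l : List G} (h : (1:G) ∈ l) :
    leftComm l = 1 := by
  cases l with
  | nil => rfl
  | cons a t =>
    simp only [leftComm]
    rcases List.mem_cons.mp h with h1 | h1
    · rw [← h1]
      exact foldl_comm_one t
    · exact foldl_comm_of_one_mem t a h1

lemma conj_eq_of_commute {G : Type*} [Group G] {g x : G} (h : Commute g x) :
    g * x * g⁻¹ = x := by
  rw [h.eq]; group

namespace CohenAux
open Finsupp

def relSet (m : ℕ) : Set (FreeGroup (Fin m)) :=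
  {w | ∃ l : List (Fin m), 2 ≤ l.length ∧ ¬ l.Nodup ∧ w = leftComm (l.map FreeGroup.of)}

abbrev KK (m : ℕ) := FreeGroup (Fin m) ⧸ Subgroup.normalClosure (relSet m)

noncomputable def piK (m : ℕ) : FreeGroup (Fin m) →* KK m :=
  QuotientGroup.mk' _

lemma piK_surj (m : ℕ) : Function.Surjective (piK m) :=
  QuotientGroup.mk'_surjective _

noncomputable def psiF (m : ℕ) : FreeGroup (Fin m) →* (Module.End ℤ (M (Fin m)))ˣ :=
  FreeGroup.lift (fun i => Uu i)

lemma psiF_of (m : ℕ) (i : Fin m) : psiF m (FreeGroup.of i) = Uu i := FreeGroup.lift_apply_of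

lemma psiF_leftComm (m : ℕ) (l : List (Fin m)) :
    psiF m (leftComm (l.map FreeGroup.of)) = leftComm (l.map Uu) := by
  rw [map_leftComm, List.map_map]
  have hfun : (⇑(psiF m) ∘ FreeGroup.of) = Uu := funext fun i => psiF_of m i
  rw [hfun]

lemma psiF_rel (m : ℕ) : ∀ w ∈ relSet m, psiF m w = 1 := by
  rintro w ⟨l, h2, hnd, rfl⟩
  rw [psiF_leftComm]
  exact leftComm_Uu_eq_one hnd

noncomputable def psiK (m : ℕ) : KK m →* (Module.End ℤ (M (Fin m)))ˣ :=
  QuotientGroup.lift _ (psiF m) (by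
    apply Subgroup.normalClosure_le_normal
    intro w hw
    exact psiF_rel m w hw)

lemma psiK_mk (m : ℕ) (x : FreeGroup (Fin m)) : psiK m (piK m x) = psiF m x := rfl

section DelSec
variable (n : ℕ)

noncomputable def delF : FreeGroup (Fin (n+1)) →* FreeGroup (Fin n) :=
  FreeGroup.lift (fun j => if h : j = Fin.last n then 1 else FreeGroup.of (j.castPred h))

noncomputable def secF : FreeGroup (Fin n) →* FreeGroup (Fin (n+1)) :=
  FreeGroup.lift (fun k => FreeGroup.of k.castSucc)

lemma exists_castSucc_list (l : List (Fin (n+1))) (h : Fin.last n ∉ l) :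
    ∃ l' : List (Fin n), l = l'.map Fin.castSucc := by
  induction l with
  | nil => exact ⟨[], rfl⟩
  | cons j l ih =>
    obtain ⟨l', hl'⟩ := ih (fun hm => h (List.mem_cons_of_mem _ hm))
    have hj : j ≠ Fin.last n := fun hc => h (by simp [hc])
    refine ⟨j.castPred hj :: l', ?_⟩
    rw [List.map_cons, Fin.castSucc_castPred, ← hl']

noncomputable def dbar : KK (n+1) →* KK n :=
  QuotientGroup.lift _ ((piK n).comp (delF n)) (by
    apply Subgroup.normalClosure_le_normal
    rintro w ⟨l, h2, hnd, rfl⟩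
    rw [SetLike.mem_coe, MonoidHom.mem_ker, MonoidHom.comp_apply, map_leftComm, List.map_map]
    by_cases hlast : Fin.last n ∈ l
    · have h1 : (1 : FreeGroup (Fin n)) ∈ l.map ((delF n) ∘ FreeGroup.of) := by
        apply List.mem_map.mpr
        refine ⟨Fin.last n, hlast, ?_⟩
        simp [delF]
      rw [leftComm_eq_one_of_one_mem h1, map_one]
    · obtain ⟨l', rfl⟩ := exists_castSucc_list n l hlast
      have hmap : (l'.map Fin.castSucc).map ((delF n) ∘ FreeGroup.of) = l'.map FreeGroup.of := by
        rw [List.map_map]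
        apply List.map_congr_left
        intro k _
        have hne : k.castSucc ≠ Fin.last n := (Fin.castSucc_lt_last k).ne
        simp [delF, hne]
      rw [hmap]
      apply (QuotientGroup.eq_one_iff _).mpr
      apply Subgroup.subset_normalClosure
      refine ⟨l', by simpa using h2, ?_, rfl⟩
      intro hnd'
      exact hnd (hnd'.map (Fin.castSucc_injective n)))

noncomputable def sbar : KK n →* KK (n+1) :=
  QuotientGroup.lift _ ((piK (n+1)).comp (secF n)) (by
    apply Subgroup.normalClosure_le_normal
    rintro w ⟨l, h2, hnd, rfl⟩
    rw [SetLike.mem_coe, MonoidHom.mem_ker, MonoidHom.comp_apply, map_leftComm, List.map_map]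
    have hmap : l.map ((secF n) ∘ FreeGroup.of) = (l.map Fin.castSucc).map FreeGroup.of := by
      rw [List.map_map]
      apply List.map_congr_left
      intro k _
      simp [secF]
    rw [hmap]
    apply (QuotientGroup.eq_one_iff _).mpr
    apply Subgroup.subset_normalClosure
    refine ⟨l.map Fin.castSucc, by simpa using h2, ?_, rfl⟩
    intro hnd'
    exact hnd (hnd'.of_map))

end DelSec

section ZZ
variable {n : ℕ}

noncomputable def yel (j : Fin (n+1)) : KK (n+1) := piK (n+1) (FreeGroup.of j)

noncomputable def zel (w : List (Fin (n+1))) : KK (n+1) :=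
  piK (n+1) (leftComm ((Fin.last n :: w).map FreeGroup.of))

lemma zel_nil : zel ([] : List (Fin (n+1))) = yel (Fin.last n) := rfl

lemma zel_append (w : List (Fin (n+1))) (j : Fin (n+1)) :
    zel (w ++ [j]) = ⁅zel w, yel j⁆ := by
  unfold zel yel
  rw [← map_commutatorElement]
  congr 1
  have h1 : Fin.last n :: (w ++ [j]) = (Fin.last n :: w) ++ [j] := by simp
  rw [h1, List.map_append, show List.map FreeGroup.of [j] = [FreeGroup.of j] from rfl,
    leftComm_append_singleton _ _ (by simp)]

lemma zel_dup {w : List (Fin (n+1))} (h : ¬ (Fin.last n :: w).Nodup) : zel w = 1 := by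
  apply (QuotientGroup.eq_one_iff _).mpr
  apply Subgroup.subset_normalClosure
  refine ⟨Fin.last n :: w, ?_, h, rfl⟩
  cases w with
  | nil => simp at h
  | cons a t => simp

lemma not_nodup_append_mem {β : Type*} {t : List β} {a : β} (h : a ∈ t) :
    ¬ (t ++ [a]).Nodup := by
  intro hnd
  rw [List.nodup_append] at hnd
  exact hnd.2.2 a h a (List.mem_singleton_self a) rfl

lemma zy_comm {w : List (Fin (n+1))} {j : Fin (n+1)}
    (h : ¬ (Fin.last n :: (w ++ [j])).Nodup) : ⁅zel w, yel j⁆ = 1 := by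
  rw [← zel_append]
  exact zel_dup h

lemma zy_comm_mem {w : List (Fin (n+1))} {j : Fin (n+1)} (h : j ∈ Fin.last n :: w) :
    ⁅zel w, yel j⁆ = 1 := by
  apply zy_comm
  have : Fin.last n :: (w ++ [j]) = (Fin.last n :: w) ++ [j] := by simp
  rw [this]
  exact not_nodup_append_mem h

lemma conj_y (w : List (Fin (n+1))) (j : Fin (n+1)) :
    yel j * zel w * (yel j)⁻¹ = (zel (w ++ [j]))⁻¹ * zel w := by
  have h := zel_append w j
  rw [commutatorElement_def] at h
  rw [h]
  group

lemma commute_zel_append_y (w : List (Fin (n+1))) (j : Fin (n+1)) :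
    Commute (zel (w ++ [j])) (yel j) := by
  apply commutatorElement_eq_one_iff_commute.mp
  apply zy_comm_mem
  simp

lemma conj_y_inv (w : List (Fin (n+1))) (j : Fin (n+1)) :
    (yel j)⁻¹ * zel w * yel j = zel (w ++ [j]) * zel w := by
  have hcomm := commute_zel_append_y w j
  have h1 := conj_y w j
  have h2 : (yel j)⁻¹ * ((zel (w ++ [j]))⁻¹ * zel w) * yel j = zel w := by
    rw [← h1]; group
  have h3 : (yel j)⁻¹ * zel (w ++ [j]) * yel j = zel (w ++ [j]) := by
    calc (yel j)⁻¹ * zel (w ++ [j]) * yel j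
        = (yel j)⁻¹ * (zel (w ++ [j]) * yel j) := by group
      _ = (yel j)⁻¹ * (yel j * zel (w ++ [j])) := by rw [hcomm.eq]
      _ = zel (w ++ [j]) := by group
  calc (yel j)⁻¹ * zel w * yel j
      = ((yel j)⁻¹ * zel (w ++ [j]) * yel j) *
        ((yel j)⁻¹ * ((zel (w ++ [j]))⁻¹ * zel w) * yel j) := by group
    _ = zel (w ++ [j]) * zel w := by rw [h2, h3]

lemma zel_commute_aux : ∀ (b : ℕ), ∀ (w' : List (Fin (n+1))), n + 1 ≤ w'.length + b →
    ∀ w, Commute (zel w) (zel w') := by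
  intro b
  induction b with
  | zero =>
    intro w' hlen w
    have hnd : ¬ (Fin.last n :: w').Nodup := by
      intro hnd
      have hle := hnd.length_le_card
      simp only [List.length_cons, Fintype.card_fin] at hle
      omega
    rw [zel_dup hnd]
    exact Commute.one_right _
  | succ b ihb =>
    intro w' hlen w
    induction w using List.reverseRecOn with
    | nil =>
      rw [zel_nil]
      exact (commutatorElement_eq_one_iff_commute.mp (zy_comm_mem (by simp))).symm
    | append_singleton w j ihw =>
      have hZZ' : Commute (zel w) (zel w') := ihw
      have hZC : Commute (zel w) (zel (w' ++ [j])) :=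
        ihb (w' ++ [j]) (by simp; omega) w
      have hCY : Commute (zel (w' ++ [j])) (yel j) := commute_zel_append_y w' j
      have hyz' := conj_y w' j
      have hyz'2 := conj_y_inv w' j
      rw [zel_append w j]
      set Z := zel w
      set Y := yel j
      set Z' := zel w'
      set C := zel (w' ++ [j])
      have key : ⁅Z, Y⁆ * Z' * ⁅Z, Y⁆⁻¹ = Z' := by
        have e1 : (MulAut.conj Y⁻¹) Z' = C * Z' := by
          simp only [MulAut.conj_apply, inv_inv]
          exact hyz'2
        have e2 : (MulAut.conj Z⁻¹) (C * Z') = C * Z' := by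
          simp only [MulAut.conj_apply]
          exact conj_eq_of_commute ((hZC.mul_right hZZ').inv_left)
        have e3 : (MulAut.conj Y) (C * Z') = Z' := by
          simp only [MulAut.conj_apply]
          have hyC : Y * C * Y⁻¹ = C := conj_eq_of_commute hCY.symm
          calc Y * (C * Z') * Y⁻¹ = (Y * C * Y⁻¹) * (Y * Z' * Y⁻¹) := by group
            _ = C * ((zel (w' ++ [j]))⁻¹ * zel w') := by rw [hyC, hyz']
            _ = Z' := mul_inv_cancel_left C Z'
        have e4 : (MulAut.conj Z) Z' = Z' := by
          simp only [MulAut.conj_apply]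
          exact conj_eq_of_commute hZZ'
        have expand : (MulAut.conj ⁅Z, Y⁆) Z' = Z' := by
          rw [commutatorElement_def, map_mul, map_mul, map_mul]
          simp only [MulAut.mul_apply]
          rw [e1, e2, e3, e4]
        simpa only [MulAut.conj_apply] using expand
      have := mul_inv_eq_iff_eq_mul.mp key
      exact this

lemma zel_commute (w w' : List (Fin (n+1))) : Commute (zel w) (zel w') :=
  zel_commute_aux (n + 1) w' (by omega) w

noncomputable def Zbar : Subgroup (KK (n+1)) := Subgroup.closure (Set.range (zel (n := n)))

lemma zel_mem_Zbar (w : List (Fin (n+1))) : zel w ∈ Zbar (n := n) :=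
  Subgroup.subset_closure ⟨w, rfl⟩

lemma conj_mem_Zbar (j : Fin (n+1)) :
    ∀ x ∈ Zbar (n := n), yel j * x * (yel j)⁻¹ ∈ Zbar (n := n) ∧
      (yel j)⁻¹ * x * yel j ∈ Zbar (n := n) := by
  intro x hx
  induction hx using Subgroup.closure_induction with
  | mem x hx =>
    obtain ⟨w, rfl⟩ := hx
    constructor
    · rw [conj_y]
      exact mul_mem (inv_mem (zel_mem_Zbar _)) (zel_mem_Zbar _)
    · rw [conj_y_inv]
      exact mul_mem (zel_mem_Zbar _) (zel_mem_Zbar _)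
  | one => constructor <;> simp [one_mem]
  | mul x y hx hy ihx ihy =>
    constructor
    · have h : yel j * (x * y) * (yel j)⁻¹ =
          (yel j * x * (yel j)⁻¹) * (yel j * y * (yel j)⁻¹) := by group
      rw [h]; exact mul_mem ihx.1 ihy.1
    · have h : (yel j)⁻¹ * (x * y) * yel j =
          ((yel j)⁻¹ * x * yel j) * ((yel j)⁻¹ * y * yel j) := by group
      rw [h]; exact mul_mem ihx.2 ihy.2
  | inv x hx ihx =>
    constructor
    · have h : yel j * x⁻¹ * (yel j)⁻¹ = (yel j * x * (yel j)⁻¹)⁻¹ := by group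
      rw [h]; exact inv_mem ihx.1
    · have h : (yel j)⁻¹ * x⁻¹ * yel j = ((yel j)⁻¹ * x * yel j)⁻¹ := by group
      rw [h]; exact inv_mem ihx.2

lemma yel_gen : Subgroup.closure (Set.range (yel (n := n))) = ⊤ := by
  have h1 : Subgroup.map (piK (n+1)) ⊤ = ⊤ :=
    Subgroup.map_top_of_surjective _ (piK_surj (n+1))
  rw [← FreeGroup.closure_range_of (Fin (n+1))] at h1
  rw [MonoidHom.map_closure] at h1
  rw [← Set.range_comp] at h1
  exact h1

instance Zbar_normal : (Zbar (n := n)).Normal := by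
  rw [← Subgroup.normalizer_eq_top_iff]
  rw [eq_top_iff, ← yel_gen]
  apply (Subgroup.closure_le _).mpr
  rintro _ ⟨j, rfl⟩
  rw [SetLike.mem_coe, Subgroup.mem_normalizer_iff]
  intro h
  constructor
  · intro hh
    exact (conj_mem_Zbar j h hh).1
  · intro hh
    have := (conj_mem_Zbar j _ hh).2
    have heq : (yel j)⁻¹ * (yel j * h * (yel j)⁻¹) * yel j = h := by group
    rwa [heq] at this

lemma ker_dbar_le_Zbar (g : KK (n+1)) (hg : dbar n g = 1) : g ∈ Zbar (n := n) := by
  have hq : (QuotientGroup.mk' (Zbar (n := n))).comp ((sbar n).comp (dbar n)) =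
      QuotientGroup.mk' (Zbar (n := n)) := by
    apply QuotientGroup.monoidHom_ext
    apply FreeGroup.ext_hom
    intro j
    simp only [MonoidHom.comp_apply]
    show (QuotientGroup.mk' (Zbar (n := n)))
        ((sbar n) ((dbar n) ((piK (n+1)) (FreeGroup.of j)))) =
      (QuotientGroup.mk' (Zbar (n := n))) ((piK (n+1)) (FreeGroup.of j))
    by_cases hj : j = Fin.last n
    · subst hj
      have h1 : delF n (FreeGroup.of (Fin.last n)) = 1 := by simp [delF]
      have hd : dbar n (piK (n+1) (FreeGroup.of (Fin.last n))) = piK n (delF n (FreeGroup.of (Fin.last n))) := rfl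
      rw [hd, h1, map_one, map_one]
      have hz : (QuotientGroup.mk' (Zbar (n := n))) (piK (n+1) (FreeGroup.of (Fin.last n))) = 1 := by
        apply (QuotientGroup.eq_one_iff _).mpr
        have hzz : piK (n+1) (FreeGroup.of (Fin.last n)) = zel [] := rfl
        rw [hzz]
        exact zel_mem_Zbar []
      rw [hz]
      try exact map_one _
    · have h1 : dbar n (piK (n+1) (FreeGroup.of j)) = piK n (FreeGroup.of (j.castPred hj)) := by
        have hd : dbar n (piK (n+1) (FreeGroup.of j)) = piK n (delF n (FreeGroup.of j)) := rfl
        rw [hd]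
        all_goals congr 1
        all_goals simp [delF, hj]
      rw [h1]
      have h2 : sbar n (piK n (FreeGroup.of (j.castPred hj))) =
          piK (n+1) (FreeGroup.of ((j.castPred hj).castSucc)) := by
        have hs : sbar n (piK n (FreeGroup.of (j.castPred hj))) =
            piK (n+1) (secF n (FreeGroup.of (j.castPred hj))) := rfl
        rw [hs]
        all_goals congr 1
        all_goals simp [secF]
      rw [h2]
      try rw [Fin.castSucc_castPred]
  have happ : (QuotientGroup.mk' (Zbar (n := n))) ((sbar n) ((dbar n) g)) =
      (QuotientGroup.mk' (Zbar (n := n))) g := by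
    have := congrArg (fun f => f g) hq
    simpa using this
  rw [hg, map_one] at happ
  exact (QuotientGroup.eq_one_iff _).mp happ.symm

end ZZ
end CohenAux

namespace CohenAux
open Finsupp

variable {α : Type} [DecidableEq α]

lemma units_inv_val {R : Type*} [Ring R] (u : Rˣ) (x : R) (h : u.val = 1 + x)
    (hx : x * x = 0) : (u⁻¹).val = 1 - x := by
  have h1 : u.val * (1 - x) = 1 := by
    rw [h]
    have h2 : ((1 + x) * (1 - x) : R) = 1 - x * x := by noncomm_ring
    rw [h2, hx, sub_zero]
  calc (u⁻¹).val = (u⁻¹).val * (u.val * (1 - x)) := by rw [h1, mul_one]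
    _ = ((u⁻¹).val * u.val) * (1 - x) := by rw [mul_assoc]
    _ = 1 - x := by rw [Units.inv_mul, one_mul]

lemma unit_zpow_val {R : Type*} [Ring R] (u : Rˣ) (x : R) (hx : x * x = 0)
    (hval : u.val = 1 + x) : ∀ k : ℤ, (u ^ k).val = 1 + k • x := by
  have hinv : (u⁻¹).val = 1 - x := units_inv_val u x hval hx
  intro k
  induction k using Int.induction_on with
  | zero => simp
  | succ k ih =>
    have h1 : u ^ ((k : ℤ) + 1) = u ^ (k : ℤ) * u := by
      rw [zpow_add_one]
    rw [h1, Units.val_mul, ih, hval]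
    rw [mul_add, mul_one, add_mul, one_mul, smul_mul_assoc, hx, smul_zero, add_zero,
      add_smul, one_smul]
    abel
  | pred k ih =>
    have h1 : u ^ (-(k : ℤ) - 1) = u ^ (-(k : ℤ)) * u⁻¹ := by
      rw [zpow_sub_one]
    rw [h1, Units.val_mul, ih, hinv]
    rw [mul_sub, mul_one, add_mul, one_mul, smul_mul_assoc, hx, smul_zero, add_zero,
      sub_smul, one_smul]
    abel

lemma one_add_pow {R : Type*} [Ring R] (x : R) (hx : x * x = 0) :
    ∀ k : ℕ, (1 + x) ^ k = 1 + (k : ℤ) • x := by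
  intro k
  induction k with
  | zero => simp
  | succ k ih =>
    rw [pow_succ, ih, mul_add, mul_one, add_mul, one_mul, smul_mul_assoc, hx, smul_zero,
      add_zero]
    push_cast
    rw [add_smul, one_smul]
    abel

lemma LieE_eq_zero {l : List α} (hl : l ≠ []) (h : ¬ l.Nodup) : LieE l = 0 := by
  have h1 := LieE_mem_SPred l hl
  have h2 : sp (SPred (↑l : Multiset α) l.length l) = ⊥ := by
    apply sp_eq_bot
    rintro v ⟨hm, _, _⟩
    obtain ⟨x, hx⟩ : ∃ x, 1 < l.count x := by
      by_contra hc
      push_neg at hc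
      exact h (List.nodup_iff_count_le_one.mpr hc)
    apply Ew_eq_zero
    intro hvnd
    have hcnt : l.count x ≤ v.count x := by
      have := Multiset.le_iff_count.mp hm x
      simpa using this
    have := List.nodup_iff_count_le_one.mp hvnd x
    omega
  rw [h2, Submodule.mem_bot] at h1
  exact h1

section Final
variable {n : ℕ}

noncomputable def LE (w : List (Fin (n+1))) : Module.End ℤ (M (Fin (n+1))) :=
  LieE (Fin.last n :: w)

lemma LE_sq (w w' : List (Fin (n+1))) : LE w * LE w' = 0 := LieE_mul_LieE w w'

lemma psiK_zel_val (w : List (Fin (n+1))) :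
    (psiK (n+1) (zel w)).val = 1 + LE (n := n) w := by
  by_cases hnd : (Fin.last n :: w).Nodup
  · have h1 : psiK (n+1) (zel w) = psiF (n+1) (leftComm ((Fin.last n :: w).map FreeGroup.of)) := rfl
    rw [h1, psiF_leftComm]
    exact leftComm_Uu_of_nodup (by simp) hnd
  · rw [zel_dup hnd, map_one]
    rw [show LE (n := n) w = LieE (Fin.last n :: w) from rfl,
      LieE_eq_zero (by simp) hnd, add_zero]
    rfl

lemma psiK_zel_zpow (w : List (Fin (n+1))) (k : ℤ) :
    ((psiK (n+1) (zel w)) ^ k).val = 1 + k • LE (n := n) w :=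
  unit_zpow_val _ _ (LE_sq w w) (psiK_zel_val w) k

lemma zel_commute_all (w : List (Fin (n+1))) : ∀ y ∈ Zbar (n := n), Commute (zel w) y := by
  intro y hy
  induction hy using Subgroup.closure_induction with
  | mem y hy => obtain ⟨w', rfl⟩ := hy; exact zel_commute w w'
  | one => exact Commute.one_right _
  | mul y z _ _ ih1 ih2 => exact ih1.mul_right ih2
  | inv y _ ih => exact ih.inv_right

lemma zbar_commute : ∀ x ∈ Zbar (n := n), ∀ y ∈ Zbar (n := n), Commute x y := by
  intro x hx
  induction hx using Subgroup.closure_induction with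
  | mem x hx =>
    obtain ⟨w, rfl⟩ := hx
    exact fun y hy => zel_commute_all w y hy
  | one => exact fun y hy => Commute.one_left _
  | mul x z hx hz ih1 ih2 => exact fun y hy => (ih1 y hy).mul_left (ih2 y hy)
  | inv x hx ih => exact fun y hy => (ih y hy).inv_left

noncomputable def commGroupZbar : CommGroup ↥(Zbar (n := n)) :=
  { (inferInstance : Group ↥(Zbar (n := n))) with
    mul_comm := fun a b => Subtype.ext (zbar_commute _ a.2 _ b.2).eq }

end Final
end CohenAux

namespace CohenAux
open Finsupp

section Final2
variable {n : ℕ}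

noncomputable def Phi (mf : List (Fin (n+1)) →₀ ℤ) : ↥(Zbar (n := n)) :=
  letI := commGroupZbar (n := n)
  mf.prod fun w k => (⟨zel w, zel_mem_Zbar w⟩ : ↥(Zbar (n := n))) ^ k

lemma Phi_add (m1 m2 : List (Fin (n+1)) →₀ ℤ) : Phi (n := n) (m1 + m2) = Phi m1 * Phi m2 := by
  letI := commGroupZbar (n := n)
  unfold Phi
  exact Finsupp.prod_add_index' (fun a => zpow_zero _) (fun a b c => zpow_add _ b c)

lemma Phi_single (w : List (Fin (n+1))) (k : ℤ) :
    Phi (n := n) (Finsupp.single w k) = (⟨zel w, zel_mem_Zbar w⟩ : ↥(Zbar (n := n))) ^ k := by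
  letI := commGroupZbar (n := n)
  unfold Phi
  exact Finsupp.prod_single_index (zpow_zero _)

lemma Phi_zero : Phi (n := n) 0 = 1 := by
  letI := commGroupZbar (n := n)
  unfold Phi
  exact Finsupp.prod_zero_index

lemma mem_Zbar_rep (g : KK (n+1)) (hg : g ∈ Zbar (n := n)) :
    ∃ mf : List (Fin (n+1)) →₀ ℤ, g = ↑(Phi (n := n) mf) := by
  induction hg using Subgroup.closure_induction with
  | mem x hx =>
    obtain ⟨w, rfl⟩ := hx
    refine ⟨Finsupp.single w 1, ?_⟩
    rw [Phi_single, zpow_one]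
  | one => exact ⟨0, by rw [Phi_zero]; rfl⟩
  | mul x y hx hy ihx ihy =>
    obtain ⟨m1, rfl⟩ := ihx
    obtain ⟨m2, rfl⟩ := ihy
    exact ⟨m1 + m2, by rw [Phi_add]; rfl⟩
  | inv x hx ihx =>
    obtain ⟨m1, rfl⟩ := ihx
    refine ⟨-m1, ?_⟩
    have h1 : Phi (n := n) (-m1) * Phi (n := n) m1 = 1 := by
      rw [← Phi_add, neg_add_cancel, Phi_zero]
    rw [eq_inv_of_mul_eq_one_left h1]
    rfl

lemma psiK_Phi_val (mf : List (Fin (n+1)) →₀ ℤ) :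
    (psiK (n+1) ↑(Phi (n := n) mf)).val =
      1 + mf.sum (fun w k => k • LE (n := n) w) := by
  induction mf using Finsupp.induction with
  | zero => rw [Phi_zero]; simp [Finsupp.sum_zero_index]
  | single_add a b f haf hb ih =>
    have hsum : (Finsupp.single a b + f).sum (fun w k => k • LE (n := n) w) =
        b • LE (n := n) a + f.sum (fun w k => k • LE (n := n) w) := by
      rw [Finsupp.sum_add_index' (h := fun w k => k • LE (n := n) w)
          (fun w => zero_smul ℤ _) (fun w k1 k2 => add_smul k1 k2 _),
        Finsupp.sum_single_index (h := fun w k => k • LE (n := n) w) (zero_smul ℤ _)]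
    rw [hsum, Phi_add, Phi_single]
    have hcoe : ((( (⟨zel a, zel_mem_Zbar a⟩ : ↥(Zbar (n := n))) ^ b) *
        Phi (n := n) f : ↥(Zbar (n := n))) : KK (n+1)) = (zel a) ^ b * ↑(Phi (n := n) f) := by
      push_cast
      rfl
    rw [hcoe, map_mul, map_zpow, Units.val_mul, psiK_zel_zpow, ih]
    set x := b • LE (n := n) a
    set S := f.sum (fun w k => k • LE (n := n) w)
    have hxS : x * S = 0 := by
      show (b • LE (n := n) a) * S = 0
      rw [smul_mul_assoc]
      have : LE (n := n) a * S = 0 := by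
        show LE (n := n) a * f.sum (fun w k => k • LE (n := n) w) = 0
        rw [Finsupp.sum, Finset.mul_sum]
        apply Finset.sum_eq_zero
        intro w _
        rw [mul_smul_comm, LE_sq, smul_zero]
      rw [this, smul_zero]
    have hexp : (1 + x) * (1 + S) = 1 + (x + S) + x * S := by noncomm_ring
    rw [hexp, hxS, add_zero]

lemma coeff_eval (mf : List (Fin (n+1)) →₀ ℤ) (w₀ : List (Fin (n+1)))
    (hnd : (Fin.last n :: w₀).Nodup) :
    ((mf.sum fun w k => k • LE (n := n) w) (Finsupp.single [] (1:ℤ))) (Fin.last n :: w₀)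
      = mf w₀ := by
  rw [Finsupp.sum, LinearMap.sum_apply, Finsupp.finset_sum_apply]
  have hterm : ∀ w : List (Fin (n+1)),
      ((mf w • LE (n := n) w) (Finsupp.single [] (1:ℤ))) (Fin.last n :: w₀) =
        mf w * ((LE (n := n) w (Finsupp.single [] (1:ℤ))) (Fin.last n :: w₀)) := by
    intro w
    rw [LinearMap.smul_apply, Finsupp.smul_apply, smul_eq_mul]
  have hcoeff : ∀ w : List (Fin (n+1)),
      ((LE (n := n) w) (Finsupp.single [] (1:ℤ))) (Fin.last n :: w₀) =
        if w₀ = w then 1 else 0 := by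
    intro w
    by_cases hw : (Fin.last n :: w).Nodup
    · have h1 := LieE_coeff (Fin.last n) w [] w₀ (by simpa using hw)
      rw [List.append_nil] at h1
      exact h1
    · rw [show LE (n := n) w = LieE (Fin.last n :: w) from rfl, LieE_eq_zero (by simp) hw]
      have hne : w₀ ≠ w := fun hc => hw (hc ▸ hnd)
      simp [hne]
  rw [Finset.sum_eq_single w₀]
  · rw [hterm, hcoeff, if_pos rfl, mul_one]
  · intro w _ hne
    rw [hterm, hcoeff, if_neg (fun hc => hne hc.symm), mul_zero]
  · intro hnot
    rw [hterm, hcoeff, if_pos rfl, mul_one]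
    exact Finsupp.notMem_support_iff.mp hnot

end Final2

lemma KK_torsion_free : ∀ m : ℕ, Monoid.IsTorsionFree (KK m) := by
  intro m
  induction m with
  | zero =>
    intro g hg _
    apply hg
    obtain ⟨x, rfl⟩ := piK_surj 0 g
    have : x = 1 := Subsingleton.elim x 1
    rw [this, map_one]
  | succ n ih =>
    intro g hg hfin
    apply hg
    have h1 : dbar n g = 1 := by
      by_contra hne
      exact ih _ hne ((dbar n).isOfFinOrder hfin)
    have hZ : g ∈ Zbar (n := n) := ker_dbar_le_Zbar g h1
    obtain ⟨mf, rfl⟩ := mem_Zbar_rep g hZ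
    obtain ⟨k, hk, hgk⟩ := isOfFinOrder_iff_pow_eq_one.mp hfin
    -- apply psiK to g ^ k = 1
    set S := mf.sum (fun w k => k • LE (n := n) w) with hSdef
    have hSS : S * S = 0 := by
      rw [hSdef, Finsupp.sum, Finset.sum_mul]
      apply Finset.sum_eq_zero
      intro w _
      rw [Finset.mul_sum]
      apply Finset.sum_eq_zero
      intro w' _
      rw [smul_mul_assoc, mul_smul_comm, LE_sq, smul_zero, smul_zero]
    have hval : (psiK (n+1) ↑(Phi (n := n) mf)).val = 1 + S := psiK_Phi_val mf
    have hpow : ((psiK (n+1) ↑(Phi (n := n) mf)) ^ k).val = 1 + (k : ℤ) • S := by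
      rw [Units.val_pow_eq_pow_val, hval, one_add_pow S hSS k]
    have hone : (psiK (n+1) ↑(Phi (n := n) mf)) ^ k = 1 := by
      rw [← map_pow, hgk, map_one]
    have hS0 : (k : ℤ) • S = 0 := by
      have h3 : (1 : Module.End ℤ (M (Fin (n+1)))) + (k : ℤ) • S = 1 := by
        rw [← hpow, hone, Units.val_one]
      exact add_eq_left.mp h3
    have hmf : ∀ w₀, (Fin.last n :: w₀).Nodup → mf w₀ = 0 := by
      intro w₀ hnd
      have h2 := congrArg (fun φ : Module.End ℤ (M (Fin (n+1))) =>
        (φ (Finsupp.single [] (1:ℤ))) (Fin.last n :: w₀)) hS0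
      simp only [LinearMap.smul_apply, Finsupp.smul_apply, smul_eq_mul,
        LinearMap.zero_apply, Finsupp.coe_zero, Pi.zero_apply] at h2
      rw [coeff_eval mf w₀ hnd] at h2
      rcases mul_eq_zero.mp h2 with h | h
      · exact absurd h (by exact_mod_cast hk.ne')
      · exact h
    have hPhi : Phi (n := n) mf = 1 := by
      letI := commGroupZbar (n := n)
      unfold Phi
      rw [Finsupp.prod]
      apply Finset.prod_eq_one
      intro w hw
      by_cases hnd : (Fin.last n :: w).Nodup
      · rw [hmf w hnd, zpow_zero]
        rfl
      · apply Subtype.ext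
        push_cast
        rw [zel_dup hnd, one_zpow]
        rfl
    rw [hPhi]
    rfl

end CohenAux

theorem cohen_Kn_torsion_free (n : ℕ) :
    Monoid.IsTorsionFree
      (FreeGroup (Fin n) ⧸ Subgroup.normalClosure
        {w : FreeGroup (Fin n) | ∃ l : List (Fin n),
          2 ≤ l.length ∧ ¬ l.Nodup ∧ w = leftComm (l.map FreeGroup.of)}) := by
  exact CohenAux.KK_torsion_free n
end
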